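/- Let P be an invertible linear map on a d-dimensional real vector space whose eigenvalues all have modulus strictly greater than 1, and suppose det(P) > 0. Then for every positive integer n, (-1)^d · det(I - Pⁿ) > 0. -/

import Mathlib

open Polynomial Matrix

lemma charpoly_eval_eq_det' {d : ℕ} (A : Matrix (Fin d) (Fin d) ℂ) (z : ℂ) :
    A.charpoly.eval z = (z • (1 : Matrix (Fin d) (Fin d) ℂ) - A).det := by
  rw [Matrix.charpoly, eval_det, matPolyEquiv_charmatrix]
  congr 1
  ext i j
  simp [Matrix.scalar, Algebra.algebraMap_eq_smul_one, Matrix.diagonal, Matrix.one_apply]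

lemma spectrum_isRoot_charpoly' {d : ℕ} {A : Matrix (Fin d) (Fin d) ℂ} {z : ℂ}
    (hz : z ∈ spectrum ℂ A) : A.charpoly.IsRoot z := by
  rw [spectrum.mem_iff] at hz
  have hdet : (z • (1 : Matrix (Fin d) (Fin d) ℂ) - A).det = 0 := by
    by_contra h
    exact hz <| by
      rw [Algebra.algebraMap_eq_smul_one]
      exact (Matrix.isUnit_iff_isUnit_det _).mpr (isUnit_iff_ne_zero.mpr h)
  rw [Polynomial.IsRoot, charpoly_eval_eq_det', hdet]

theorem stmt_1 (E : Type*) [AddCommGroup E] [Module ℝ E] [FiniteDimensional ℝ E]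
    (P : E →ₗ[ℝ] E) (hinv : Function.Bijective P)
    (hP : ∀ z : ℂ, ((LinearMap.charpoly P).map (algebraMap ℝ ℂ)).IsRoot z → 1 < ‖z‖)
    (hdet : 0 < LinearMap.det P)
    (n : ℕ) (hn : 1 ≤ n) :
    0 < (-1 : ℝ) ^ (Module.finrank ℝ E) *
      LinearMap.det ((LinearMap.id : E →ₗ[ℝ] E) - P ^ n) := by
  classical
  set d := Module.finrank ℝ E with hd
  let b := Module.finBasis ℝ E
  set M : Matrix (Fin d) (Fin d) ℝ := LinearMap.toMatrix b b P with hM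
  have hdetM : M.det = LinearMap.det P := LinearMap.det_toMatrix b P
  have hgoal : LinearMap.det ((LinearMap.id : E →ₗ[ℝ] E) - P ^ n)
      = ((1 : Matrix (Fin d) (Fin d) ℝ) - M ^ n).det := by
    rw [← LinearMap.det_toMatrix b, map_sub, LinearMap.toMatrix_id, LinearMap.toMatrix_pow]
  set f := algebraMap ℝ ℂ with hf
  set Mc : Matrix (Fin d) (Fin d) ℂ := M.map f with hMc
  have hcharc : Mc.charpoly = (LinearMap.charpoly P).map f := by
    rw [hMc, Matrix.charpoly_map, hM, LinearMap.charpoly_toMatrix]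
  -- key: no real eigenvalue of M^n in [0,1]
  have key : ∀ t ∈ Set.Icc (0:ℝ) 1,
      (t • (1 : Matrix (Fin d) (Fin d) ℝ) - M ^ n).det ≠ 0 := by
    intro t ht h0
    have hmap : (t • (1 : Matrix (Fin d) (Fin d) ℝ) - M ^ n).map f
        = (t : ℂ) • (1 : Matrix (Fin d) (Fin d) ℂ) - Mc ^ n := by
      have : Mc ^ n = (M ^ n).map f := by
        rw [hMc, ← RingHom.mapMatrix_apply, ← RingHom.mapMatrix_apply, map_pow]
      rw [this]
      ext i j
      simp only [Matrix.map_apply, Matrix.sub_apply, Matrix.smul_apply, Matrix.one_apply,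
        smul_eq_mul, hf, Complex.coe_algebraMap]
      push_cast
      split <;> simp
    have h0c : ((t : ℂ) • (1 : Matrix (Fin d) (Fin d) ℂ) - Mc ^ n).det = 0 := by
      rw [← hmap, ← RingHom.mapMatrix_apply, ← RingHom.map_det, h0, map_zero]
    have hts : (t : ℂ) ∈ spectrum ℂ (Mc ^ n) := by
      rw [spectrum.mem_iff]
      intro hu
      have := (Matrix.isUnit_iff_isUnit_det _).mp hu
      rw [Algebra.algebraMap_eq_smul_one, h0c] at this
      exact this.ne_zero rfl
    rw [spectrum.map_pow_of_pos Mc (by omega : 0 < n)] at hts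
    obtain ⟨z, hz, hzn⟩ := hts
    have hroot : Mc.charpoly.IsRoot z := spectrum_isRoot_charpoly' hz
    rw [hcharc] at hroot
    have h1 : 1 < ‖z‖ := hP z hroot
    have : 1 < ‖(t : ℂ)‖ := by
      rw [← hzn, norm_pow]
      exact one_lt_pow₀ h1 (by omega)
    rw [Complex.norm_real, Real.norm_eq_abs, abs_of_nonneg ht.1] at this
    linarith [ht.2]
  have hcont : Continuous fun t : ℝ =>
      (-1 : ℝ) ^ d * (t • (1 : Matrix (Fin d) (Fin d) ℝ) - M ^ n).det :=
    continuous_const.mul <|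
      Continuous.matrix_det ((continuous_id.smul continuous_const).sub continuous_const)
  have h0pos : (0:ℝ) < (-1:ℝ) ^ d *
      ((0:ℝ) • (1 : Matrix (Fin d) (Fin d) ℝ) - M ^ n).det := by
    rw [zero_smul, zero_sub, Matrix.det_neg, Fintype.card_fin, ← mul_assoc, ← mul_pow]
    simp only [neg_mul_neg, one_mul, one_pow, Matrix.det_pow, hdetM]
    exact pow_pos hdet n
  rw [hgoal]
  by_contra hle
  push_neg at hle
  have h1ne : ((1:ℝ) • (1 : Matrix (Fin d) (Fin d) ℝ) - M ^ n).det ≠ 0 :=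
    key 1 (by norm_num)
  rw [one_smul] at h1ne
  have h1lt : (-1:ℝ) ^ d *
      ((1:ℝ) • (1 : Matrix (Fin d) (Fin d) ℝ) - M ^ n).det < 0 := by
    rw [one_smul]
    exact lt_of_le_of_ne hle (mul_ne_zero (pow_ne_zero d (by norm_num)) h1ne)
  have hsub := intermediate_value_Icc' (by norm_num : (0:ℝ) ≤ 1) hcont.continuousOn
  have h0mem : (0:ℝ) ∈ Set.Icc ((-1:ℝ) ^ d *
      ((1:ℝ) • (1 : Matrix (Fin d) (Fin d) ℝ) - M ^ n).det)
      ((-1:ℝ) ^ d * ((0:ℝ) • (1 : Matrix (Fin d) (Fin d) ℝ) - M ^ n).det) :=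
    ⟨le_of_lt h1lt, le_of_lt h0pos⟩
  obtain ⟨t, ht, heq⟩ := hsub h0mem
  refine key t ht ?_
  rcases mul_eq_zero.mp heq with h | h
  · exact absurd h (pow_ne_zero d (by norm_num))
  · exact h
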